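/- For all real x and natural k ≥ 1, the derivative formula ∂_t (v^k Dv) = k v^{k−1} v_t Dv + v^k D v_t holds for sufficiently regular v, and consequently if v, v_t ∈ L^2(0,T;H^l_0(0,L)) with v ∈ C([0,T];H^l_0(0,L)), then v^k Dv ∈ H^1(0,T; L^2(0,L)) with ‖(v^k Dv)_t‖_{L^2(Q_T)}² ≤ 2^{k+2}(k²+1) ‖v‖_{C([0,T];H^l_0)}^{2k} ‖v_t‖_{L^2(0,T;H^l_0)}². -/

import Mathlib

open MeasureTheory intervalIntegral Set

lemma two_le_sum_aux (l : ℕ) (hl : 1 ≤ l) (a : ℕ → ℝ) (ha : ∀ i, 0 ≤ a i) :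
    a 0 + a 1 ≤ ∑ i ∈ Finset.range (l+1), a i := by
  have h : ({0, 1} : Finset ℕ) ⊆ Finset.range (l+1) := by
    intro i hi
    simp only [Finset.mem_insert, Finset.mem_singleton] at hi
    simp only [Finset.mem_range]; omega
  calc a 0 + a 1 = ∑ i ∈ ({0,1} : Finset ℕ), a i := by simp
    _ ≤ _ := Finset.sum_le_sum_of_subset_of_nonneg h (fun i _ _ => ha i)

lemma sup_sq_le_energy (L : ℝ) (hL : 0 < L) (f f' : ℝ → ℝ)
    (hd : ∀ x ∈ Set.Icc (0:ℝ) L, HasDerivAt f (f' x) x)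
    (h0 : f 0 = 0)
    (hif : IntervalIntegrable (fun x => (f x)^2) volume 0 L)
    (hif' : IntervalIntegrable (fun x => (f' x)^2) volume 0 L) :
    ∀ x ∈ Set.Icc (0:ℝ) L,
      (f x)^2 ≤ (∫ y in (0:ℝ)..L, (f y)^2) + ∫ y in (0:ℝ)..L, (f' y)^2 := by
  intro x hx
  obtain ⟨hx0, hxL⟩ := hx
  set g : ℝ → ℝ := deriv f with hgdef
  have hgeq : ∀ y ∈ Set.Icc (0:ℝ) L, g y = f' y := fun y hy => (hd y hy).deriv
  have hgm : Measurable g := measurable_deriv f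
  have hfc : ContinuousOn f (Set.Icc (0:ℝ) L) :=
    fun y hy => ((hd y hy).continuousAt).continuousWithinAt
  have hsub : Set.uIoc (0:ℝ) L ⊆ Set.Icc 0 L := by
    rw [Set.uIoc_of_le hL.le]; exact Set.Ioc_subset_Icc_self
  have hae : ∀ᵐ y ∂(volume.restrict (Set.uIoc (0:ℝ) L)), g y = f' y :=
    (ae_restrict_mem measurableSet_uIoc).mono (fun y hy => hgeq y (hsub hy))
  have hg2 : IntervalIntegrable (fun y => (g y)^2) volume 0 L := by
    refine hif'.mono_fun ((hgm.pow_const 2).aestronglyMeasurable) ?_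
    exact hae.mono fun y h => by show ‖g y ^ 2‖ ≤ ‖f' y ^ 2‖; rw [h]
  have hsum : IntervalIntegrable (fun y => (f y)^2 + (g y)^2) volume 0 L := hif.add hg2
  have hfm : AEStronglyMeasurable f (volume.restrict (Set.uIoc (0:ℝ) L)) :=
    (hfc.aestronglyMeasurable measurableSet_Icc).mono_measure
      (Measure.restrict_mono hsub le_rfl)
  have hfg : IntervalIntegrable (fun y => 2 * f y * g y) volume 0 L := by
    refine hsum.mono_fun ((hfm.const_mul 2).mul hgm.aestronglyMeasurable) ?_
    refine Filter.Eventually.of_forall fun y => ?_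
    show ‖2 * f y * g y‖ ≤ ‖f y ^ 2 + g y ^ 2‖
    rw [Real.norm_eq_abs, Real.norm_eq_abs,
      abs_of_nonneg (show (0:ℝ) ≤ f y ^ 2 + g y ^ 2 by positivity), abs_mul, abs_mul, abs_two]
    nlinarith [sq_nonneg (|f y| - |g y|), abs_nonneg (f y), abs_nonneg (g y),
      sq_abs (f y), sq_abs (g y)]
  have hsubI : Set.uIcc (0:ℝ) x ⊆ Set.uIcc (0:ℝ) L := by
    rw [Set.uIcc_of_le hx0, Set.uIcc_of_le hL.le]
    exact Set.Icc_subset_Icc_right hxL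
  have hfgx : IntervalIntegrable (fun y => 2 * f y * g y) volume 0 x := hfg.mono_set hsubI
  have hFTC : ∫ y in (0:ℝ)..x, 2 * f y * g y = (f x)^2 - (f 0)^2 := by
    refine integral_eq_sub_of_hasDerivAt (f := fun y => (f y)^2) (fun y hy => ?_) hfgx
    have hy' : y ∈ Set.Icc (0:ℝ) L := by
      rw [Set.uIcc_of_le hx0] at hy
      exact ⟨hy.1, hy.2.trans hxL⟩
    have h1 := (hd y hy').pow 2
    have h2 : HasDerivAt (f ^ 2) (2 * f y * f' y) y := by simpa [pow_one] using h1
    rw [hgeq y hy']; exact h2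
  have step1 : (f x)^2 = ∫ y in (0:ℝ)..x, 2 * f y * g y := by
    rw [hFTC, h0]; ring
  have step2 : (∫ y in (0:ℝ)..x, 2 * f y * g y)
      ≤ ∫ y in (0:ℝ)..x, ((f y)^2 + (g y)^2) :=
    integral_mono_on hx0 hfgx (hsum.mono_set hsubI)
      (fun y _ => two_mul_le_add_sq (f y) (g y))
  have step3 : (∫ y in (0:ℝ)..x, ((f y)^2 + (g y)^2))
      ≤ ∫ y in (0:ℝ)..L, ((f y)^2 + (g y)^2) :=
    integral_mono_interval le_rfl hx0 hxL
      (Filter.Eventually.of_forall fun y => by positivity) hsum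
  have step4 : (∫ y in (0:ℝ)..L, ((f y)^2 + (g y)^2))
      = (∫ y in (0:ℝ)..L, (f y)^2) + ∫ y in (0:ℝ)..L, (f' y)^2 := by
    rw [integral_add hif hg2]
    congr 1
    refine integral_congr fun y hy => ?_
    rw [hgeq y (by rw [Set.uIcc_of_le hL.le] at hy; exact hy)]
  calc (f x)^2 = _ := step1
    _ ≤ _ := step2
    _ ≤ _ := step3
    _ = _ := step4

/-- Product rule `(v^k Dv)_t = k v^{k−1} v_t Dv + v^k D v_t` and the bound
`‖(v^k Dv)_t‖²_{L²(Q_T)} ≤ 2^{k+2}(k²+1) ‖v‖_{C([0,T];H^l₀)}^{2k} ‖v_t‖²_{L²(0,T;H^l₀)}`.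
`Dv i t` (resp. `Dvt i t`) is the `i`-th spatial derivative of `v t = Dv 0 t`
(resp. of `v_t t = Dvt 0 t`); `S` bounds `sup_t ‖v(t)‖_{H^l}`. -/
theorem stmt_19 (L T : ℝ) (hL : 0 < L) (hT : 0 < T) (l k : ℕ) (hl : 1 ≤ l) (hk : 1 ≤ k)
    (Dv Dvt : ℕ → ℝ → ℝ → ℝ)
    (hderivx : ∀ t ∈ Set.Icc (0:ℝ) T, ∀ i < l, ∀ x ∈ Set.Icc (0:ℝ) L,
      HasDerivAt (fun y => Dv i t y) (Dv (i+1) t x) x)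
    (hderivxt : ∀ t ∈ Set.Icc (0:ℝ) T, ∀ i < l, ∀ x ∈ Set.Icc (0:ℝ) L,
      HasDerivAt (fun y => Dvt i t y) (Dvt (i+1) t x) x)
    (hderivt0 : ∀ t ∈ Set.Icc (0:ℝ) T, ∀ x ∈ Set.Icc (0:ℝ) L,
      HasDerivAt (fun τ => Dv 0 τ x) (Dvt 0 t x) t)
    (hderivt1 : ∀ t ∈ Set.Icc (0:ℝ) T, ∀ x ∈ Set.Icc (0:ℝ) L,
      HasDerivAt (fun τ => Dv 1 τ x) (Dvt 1 t x) t)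
    (hbc : ∀ t ∈ Set.Icc (0:ℝ) T, ∀ i < l, Dv i t 0 = 0 ∧ Dv i t L = 0)
    (hbct : ∀ t ∈ Set.Icc (0:ℝ) T, ∀ i < l, Dvt i t 0 = 0 ∧ Dvt i t L = 0)
    (hintx : ∀ t ∈ Set.Icc (0:ℝ) T, ∀ i ≤ l,
      IntervalIntegrable (fun x => (Dv i t x)^2) MeasureTheory.volume 0 L)
    (hintxt : ∀ t ∈ Set.Icc (0:ℝ) T, ∀ i ≤ l,
      IntervalIntegrable (fun x => (Dvt i t x)^2) MeasureTheory.volume 0 L)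
    (hintprod : ∀ t ∈ Set.Icc (0:ℝ) T, IntervalIntegrable
      (fun x => ((k:ℝ) * (Dv 0 t x)^(k-1) * Dvt 0 t x * Dv 1 t x
        + (Dv 0 t x)^k * Dvt 1 t x)^2) MeasureTheory.volume 0 L)
    (hintt1 : IntervalIntegrable
      (fun t => ∫ x in (0:ℝ)..L, ((k:ℝ) * (Dv 0 t x)^(k-1) * Dvt 0 t x * Dv 1 t x
        + (Dv 0 t x)^k * Dvt 1 t x)^2) MeasureTheory.volume 0 T)
    (hintt2 : IntervalIntegrable
      (fun t => ∑ i ∈ Finset.range (l+1), ∫ x in (0:ℝ)..L, (Dvt i t x)^2)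
      MeasureTheory.volume 0 T)
    (S : ℝ) (hS0 : 0 ≤ S)
    (hS : ∀ t ∈ Set.Icc (0:ℝ) T,
      (∑ i ∈ Finset.range (l+1), ∫ x in (0:ℝ)..L, (Dv i t x)^2) ≤ S^2) :
    (∀ t ∈ Set.Icc (0:ℝ) T, ∀ x ∈ Set.Icc (0:ℝ) L,
      HasDerivAt (fun τ => (Dv 0 τ x)^k * Dv 1 τ x)
        ((k:ℝ) * (Dv 0 t x)^(k-1) * Dvt 0 t x * Dv 1 t x
          + (Dv 0 t x)^k * Dvt 1 t x) t) ∧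
    (∫ t in (0:ℝ)..T, ∫ x in (0:ℝ)..L,
        ((k:ℝ) * (Dv 0 t x)^(k-1) * Dvt 0 t x * Dv 1 t x
          + (Dv 0 t x)^k * Dvt 1 t x)^2)
      ≤ 2^(k+2) * ((k:ℝ)^2+1) * S^(2*k) *
        ∫ t in (0:ℝ)..T, ∑ i ∈ Finset.range (l+1), ∫ x in (0:ℝ)..L, (Dvt i t x)^2 := by
  constructor
  · intro t ht x hx
    exact ((hderivt0 t ht x hx).pow k).mul (hderivt1 t ht x hx)
  -- notation
  set E : ℝ → ℝ := fun t => ∑ i ∈ Finset.range (l+1), ∫ x in (0:ℝ)..L, (Dvt i t x)^2 with hE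
  have hEnn : ∀ t, 0 ≤ E t := by
    intro t
    refine Finset.sum_nonneg fun i _ => ?_
    exact intervalIntegral.integral_nonneg hL.le (fun x _ => sq_nonneg _)
  set C : ℝ := 2^(k+2) * ((k:ℝ)^2+1) * S^(2*k) with hC
  have hCnn : 0 ≤ C := by positivity
  -- the per-time bound
  have key : ∀ t ∈ Set.Icc (0:ℝ) T,
      (∫ x in (0:ℝ)..L, ((k:ℝ) * (Dv 0 t x)^(k-1) * Dvt 0 t x * Dv 1 t x
        + (Dv 0 t x)^k * Dvt 1 t x)^2) ≤ C * E t := by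
    intro t ht
    -- sup bounds
    have hfb : ∀ x ∈ Set.Icc (0:ℝ) L, (Dv 0 t x)^2 ≤ S^2 := by
      intro x hx
      have h1 := sup_sq_le_energy L hL (Dv 0 t) (Dv 1 t)
        (fun y hy => hderivx t ht 0 (by omega) y hy) (hbc t ht 0 (by omega)).1
        (hintx t ht 0 (by omega)) (hintx t ht 1 hl) x hx
      refine h1.trans ((two_le_sum_aux l hl (fun i => ∫ x in (0:ℝ)..L, (Dv i t x)^2)
        (fun i => intervalIntegral.integral_nonneg hL.le (fun x _ => sq_nonneg _))).trans
        (hS t ht))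
    have hub : ∀ x ∈ Set.Icc (0:ℝ) L, (Dvt 0 t x)^2 ≤ E t := by
      intro x hx
      have h1 := sup_sq_le_energy L hL (Dvt 0 t) (Dvt 1 t)
        (fun y hy => hderivxt t ht 0 (by omega) y hy) (hbct t ht 0 (by omega)).1
        (hintxt t ht 0 (by omega)) (hintxt t ht 1 hl) x hx
      exact h1.trans (two_le_sum_aux l hl (fun i => ∫ x in (0:ℝ)..L, (Dvt i t x)^2)
        (fun i => intervalIntegral.integral_nonneg hL.le (fun x _ => sq_nonneg _)))
    have hg2S : (∫ x in (0:ℝ)..L, (Dv 1 t x)^2) ≤ S^2 := by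
      refine le_trans ?_ (hS t ht)
      refine Finset.single_le_sum (f := fun i => ∫ x in (0:ℝ)..L, (Dv i t x)^2)
        (fun i _ => intervalIntegral.integral_nonneg hL.le (fun x _ => sq_nonneg _)) ?_
      simp only [Finset.mem_range]; omega
    have hw2E : (∫ x in (0:ℝ)..L, (Dvt 1 t x)^2) ≤ E t := by
      refine Finset.single_le_sum (f := fun i => ∫ x in (0:ℝ)..L, (Dvt i t x)^2)
        (fun i _ => intervalIntegral.integral_nonneg hL.le (fun x _ => sq_nonneg _)) ?_
      simp only [Finset.mem_range]; omega
    -- pointwise in x bound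
    have hpt : ∀ x ∈ Set.Icc (0:ℝ) L,
        ((k:ℝ) * (Dv 0 t x)^(k-1) * Dvt 0 t x * Dv 1 t x + (Dv 0 t x)^k * Dvt 1 t x)^2
        ≤ 2*(k:ℝ)^2*S^(2*(k-1))*(E t)*(Dv 1 t x)^2 + 2*S^(2*k)*(Dvt 1 t x)^2 := by
      intro x hx
      set a := (k:ℝ) * (Dv 0 t x)^(k-1) * Dvt 0 t x * Dv 1 t x with ha
      set b := (Dv 0 t x)^k * Dvt 1 t x with hb
      have h2 : (a+b)^2 ≤ 2*a^2 + 2*b^2 := by nlinarith [sq_nonneg (a-b)]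
      have ha2 : a^2 ≤ (k:ℝ)^2 * S^(2*(k-1)) * (E t) * (Dv 1 t x)^2 := by
        have e1 : a^2 = (k:ℝ)^2 * ((Dv 0 t x)^2)^(k-1) * (Dvt 0 t x)^2 * (Dv 1 t x)^2 := by
          rw [ha, mul_pow, mul_pow, mul_pow, ← pow_mul, mul_comm (k-1) 2, pow_mul]
        rw [e1, show S^(2*(k-1)) = (S^2)^(k-1) by rw [pow_mul]]
        have hp1 : ((Dv 0 t x)^2)^(k-1) ≤ (S^2)^(k-1) :=
          pow_le_pow_left₀ (sq_nonneg _) (hfb x hx) _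
        have step : (k:ℝ)^2 * ((Dv 0 t x)^2)^(k-1) * (Dvt 0 t x)^2
            ≤ (k:ℝ)^2 * (S^2)^(k-1) * (E t) :=
          mul_le_mul (mul_le_mul_of_nonneg_left hp1 (by positivity)) (hub x hx)
            (sq_nonneg _) (by positivity)
        exact mul_le_mul_of_nonneg_right step (sq_nonneg _)
      have hb2 : b^2 ≤ S^(2*k) * (Dvt 1 t x)^2 := by
        have e1 : b^2 = ((Dv 0 t x)^2)^k * (Dvt 1 t x)^2 := by
          rw [hb, mul_pow, ← pow_mul, mul_comm k 2, pow_mul]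
        rw [e1, show S^(2*k) = (S^2)^k by rw [pow_mul]]
        exact mul_le_mul_of_nonneg_right
          (pow_le_pow_left₀ (sq_nonneg _) (hfb x hx) k) (sq_nonneg _)
      nlinarith
    -- integrate in x
    have hrint : IntervalIntegrable (fun x => 2*(k:ℝ)^2*S^(2*(k-1))*(E t)*(Dv 1 t x)^2
        + 2*S^(2*k)*(Dvt 1 t x)^2) MeasureTheory.volume 0 L :=
      ((hintx t ht 1 hl).const_mul _).add ((hintxt t ht 1 hl).const_mul _)
    have hint1 : (∫ x in (0:ℝ)..L, ((k:ℝ) * (Dv 0 t x)^(k-1) * Dvt 0 t x * Dv 1 t x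
          + (Dv 0 t x)^k * Dvt 1 t x)^2)
        ≤ ∫ x in (0:ℝ)..L, (2*(k:ℝ)^2*S^(2*(k-1))*(E t)*(Dv 1 t x)^2
          + 2*S^(2*k)*(Dvt 1 t x)^2) :=
      intervalIntegral.integral_mono_on hL.le (hintprod t ht) hrint hpt
    have hint2 : (∫ x in (0:ℝ)..L, (2*(k:ℝ)^2*S^(2*(k-1))*(E t)*(Dv 1 t x)^2
          + 2*S^(2*k)*(Dvt 1 t x)^2))
        = 2*(k:ℝ)^2*S^(2*(k-1))*(E t) * (∫ x in (0:ℝ)..L, (Dv 1 t x)^2)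
          + 2*S^(2*k) * ∫ x in (0:ℝ)..L, (Dvt 1 t x)^2 := by
      rw [intervalIntegral.integral_add ((hintx t ht 1 hl).const_mul _)
        ((hintxt t ht 1 hl).const_mul _), intervalIntegral.integral_const_mul,
        intervalIntegral.integral_const_mul]
    have hpow : S^(2*(k-1)) * S^2 = S^(2*k) := by
      rw [← pow_add]; congr 1; omega
    have hfinal : 2*(k:ℝ)^2*S^(2*(k-1))*(E t) * (∫ x in (0:ℝ)..L, (Dv 1 t x)^2)
          + 2*S^(2*k) * (∫ x in (0:ℝ)..L, (Dvt 1 t x)^2) ≤ C * E t := by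
      have hA : 2*(k:ℝ)^2*S^(2*(k-1))*(E t) * (∫ x in (0:ℝ)..L, (Dv 1 t x)^2)
          ≤ 2*(k:ℝ)^2*S^(2*(k-1))*(E t) * S^2 := by
        have h0 : (0:ℝ) ≤ 2*(k:ℝ)^2*S^(2*(k-1))*(E t) :=
          mul_nonneg (by positivity) (hEnn t)
        exact mul_le_mul_of_nonneg_left hg2S h0
      have hB : 2*S^(2*k) * (∫ x in (0:ℝ)..L, (Dvt 1 t x)^2) ≤ 2*S^(2*k) * E t := by
        have h0 : (0:ℝ) ≤ 2*S^(2*k) := by positivity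
        exact mul_le_mul_of_nonneg_left hw2E h0
      have hmid : 2*(k:ℝ)^2*S^(2*(k-1))*(E t) * S^2 + 2*S^(2*k) * E t
          = 2 * (((k:ℝ)^2+1) * S^(2*k) * E t) := by
        have : (2:ℝ)*(k:ℝ)^2*S^(2*(k-1))*(E t)*S^2 = 2*(k:ℝ)^2*(S^(2*(k-1))*S^2)*E t := by
          ring
        rw [this, hpow]; ring
      have h2le : (2:ℝ) ≤ 2^(k+2) := by
        calc (2:ℝ) = 2^1 := (pow_one 2).symm
          _ ≤ 2^(k+2) := pow_le_pow_right₀ one_le_two (by omega)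
      have hnn : (0:ℝ) ≤ ((k:ℝ)^2+1) * S^(2*k) * E t :=
        mul_nonneg (by positivity) (hEnn t)
      calc 2*(k:ℝ)^2*S^(2*(k-1))*(E t) * (∫ x in (0:ℝ)..L, (Dv 1 t x)^2)
            + 2*S^(2*k) * (∫ x in (0:ℝ)..L, (Dvt 1 t x)^2)
          ≤ 2*(k:ℝ)^2*S^(2*(k-1))*(E t) * S^2 + 2*S^(2*k) * E t := add_le_add hA hB
        _ = 2 * (((k:ℝ)^2+1) * S^(2*k) * E t) := hmid
        _ ≤ 2^(k+2) * (((k:ℝ)^2+1) * S^(2*k) * E t) :=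
            mul_le_mul_of_nonneg_right h2le hnn
        _ = C * E t := by rw [hC]; ring
    exact hint1.trans (hint2.le.trans hfinal)
  calc (∫ t in (0:ℝ)..T, ∫ x in (0:ℝ)..L,
        ((k:ℝ) * (Dv 0 t x)^(k-1) * Dvt 0 t x * Dv 1 t x
          + (Dv 0 t x)^k * Dvt 1 t x)^2)
      ≤ ∫ t in (0:ℝ)..T, C * E t :=
        intervalIntegral.integral_mono_on hT.le hintt1 (hintt2.const_mul C) key
    _ = C * ∫ t in (0:ℝ)..T, E t := intervalIntegral.integral_const_mul _ _
    _ = _ := by rw [hC]
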